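/- Let H be a subgroup of a group G, and suppose G is contained in a monoid M such that M \ G is an ideal of M (or empty). Then the family FRAT(M,H) of finite unions of sets L₀g₁L₁⋯g_tL_t with L_i ∈ Rat(H) and g_i ∈ M equals the smallest family R of subsets of M that contains all finite subsets of M, is closed under finite union and concatenation, and is closed under Kleene star of members of R that are contained in H. -/

import Mathlib

open Pointwise
/-- The rational subsets of a monoid `M`: the smallest family of subsets
containing all finite subsets and closed under union, product, and Kleene star
(the submonoid generated by a set). -/
inductive IsRat {M : Type*} [Monoid M] : Set M → Prop
  | finite (S : Set M) : S.Finite → IsRat S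
  | union {S T : Set M} : IsRat S → IsRat T → IsRat (S ∪ T)
  | mul {S T : Set M} : IsRat S → IsRat T → IsRat (S * T)
  | star {S : Set M} : IsRat S → IsRat (Submonoid.closure S : Set M)

/-- The product of a finite list of subsets of a monoid. -/
def prodList {M : Type*} [Monoid M] : List (Set M) → Set M
  | [] => {1}
  | S :: l => S * prodList l

/-- A flat product over a submonoid `H`: a product `L₀ g₁ L₁ ⋯ g_t L_t` where
each factor is either (the image in `M` of) a rational subset of `H` or a
singleton `{g}` with `g ∈ M`. -/
def IsFlatProd {M : Type*} [Monoid M] (H : Submonoid M) (L : Set M) : Prop :=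
  ∃ l : List (Set M),
    (∀ S ∈ l, (∃ L' : Set H, IsRat L' ∧ S = ((↑) : H → M) '' L') ∨ ∃ g : M, S = {g}) ∧
    L = prodList l

/-- Flat rational subsets of `M` relative to `H`: finite unions of flat products. -/
def IsFRat {M : Type*} [Monoid M] (H : Submonoid M) (L : Set M) : Prop :=
  ∃ (n : ℕ) (f : Fin n → Set M), (∀ i, IsFlatProd H (f i)) ∧ L = ⋃ i, f i

/-- The smallest family of subsets of `M` containing all finite subsets, closed
under finite union and concatenation, and closed under the Kleene star of
members contained in `H`. -/
inductive Gen {M : Type*} [Monoid M] (H : Submonoid M) : Set M → Prop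
  | finite (S : Set M) : S.Finite → Gen H S
  | union {S T : Set M} : Gen H S → Gen H T → Gen H (S ∪ T)
  | mul {S T : Set M} : Gen H S → Gen H T → Gen H (S * T)
  | star {S : Set M} : Gen H S → S ⊆ ↑H → Gen H (Submonoid.closure S : Set M)

section Helpers
variable {M : Type*} [Monoid M] {H : Submonoid M}

lemma image_val_mul (S T : Set H) :
    (Subtype.val '' (S * T) : Set M) = (Subtype.val '' S) * (Subtype.val '' T) := by
  have h : (Subtype.val : H → M) = ⇑H.subtype := rfl
  rw [h, Set.image_mul]

lemma image_val_closure (S : Set H) :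
    (Subtype.val '' ((Submonoid.closure S : Submonoid H) : Set H) : Set M)
      = (Submonoid.closure (Subtype.val '' S) : Set M) := by
  have h1 : (Submonoid.closure S).map H.subtype = Submonoid.closure (⇑H.subtype '' S) :=
    MonoidHom.map_mclosure _ _
  have h2 := congrArg (SetLike.coe) h1
  rw [Submonoid.coe_map] at h2
  exact h2

lemma sandwich_eq_image (q r : M) (X : Set M) :
    ({q} * X * {r} : Set M) = (fun x => q * x * r) '' X := by
  rw [Set.singleton_mul, Set.mul_singleton, Set.image_image]

lemma unit_sandwich_cancel (u : Mˣ) (a z : M) : (a * u) * ((↑u⁻¹ : M) * z) = a * z := by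
  rw [mul_assoc, ← mul_assoc (u : M), Units.mul_inv, one_mul]

lemma sandwich_mul_sandwich (q r : M) (w : Mˣ) (A B : Set M) :
    ({q} * A * {(w : M)}) * ({((w⁻¹ : Mˣ) : M)} * B * {r}) = {q} * (A * B) * {r} := by
  have h : ({(w : M)} : Set M) * {((w⁻¹ : Mˣ) : M)} = 1 := by
    rw [Set.singleton_mul_singleton, Units.mul_inv, Set.singleton_one]
  calc ({q} * A * {(w : M)}) * ({((w⁻¹ : Mˣ) : M)} * B * {r})
      = {q} * A * (({(w : M)} * {((w⁻¹ : Mˣ) : M)}) * B) * {r} := by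
        simp only [mul_assoc]
    _ = {q} * (A * B) * {r} := by
        rw [h, one_mul]; simp only [mul_assoc]

lemma sandwich_mul_left (q : M) (w : Mˣ) (A B : Set M) :
    ({q} * A * {(w : M)}) * ({((w⁻¹ : Mˣ) : M)} * B) = {q} * (A * B) := by
  have h : ({(w : M)} : Set M) * {((w⁻¹ : Mˣ) : M)} = 1 := by
    rw [Set.singleton_mul_singleton, Units.mul_inv, Set.singleton_one]
  calc ({q} * A * {(w : M)}) * ({((w⁻¹ : Mˣ) : M)} * B)
      = {q} * A * (({(w : M)} * {((w⁻¹ : Mˣ) : M)}) * B) := by simp only [mul_assoc]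
    _ = {q} * (A * B) := by rw [h, one_mul]; simp only [mul_assoc]

lemma imRat_of_finite {X : Set M} (hfin : X.Finite) (hsub : X ⊆ ↑H) :
    ∃ E : Set H, IsRat E ∧ Subtype.val '' E = X := by
  refine ⟨Subtype.val ⁻¹' X, IsRat.finite _ (hfin.preimage Subtype.val_injective.injOn), ?_⟩
  rw [Set.image_preimage_eq_of_subset]
  rwa [Subtype.range_val]

end Helpers

section Sandwich
variable {M : Type*} [Monoid M] {H : Submonoid M}

lemma ratSandwich (hHgrp : ∀ h ∈ H, ∃ h' ∈ H, h * h' = 1 ∧ h' * h = 1)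
    {S' : Set H} (hS : IsRat S') :
    ∀ q r : M, IsUnit q → IsUnit r →
      (∀ s ∈ S', q * (s : M) * r ∈ H) →
      ∃ E : Set H, IsRat E ∧
        (Subtype.val '' E : Set M) = {q} * (Subtype.val '' S') * {r} := by
  induction hS with
  | finite S hfin =>
    intro q r _ _ hmem
    have hXim : ({q} * (Subtype.val '' S) * {r} : Set M)
        = (fun x => q * x * r) '' (Subtype.val '' S) := sandwich_eq_image q r _
    have hXfin : ({q} * (Subtype.val '' S) * {r} : Set M).Finite := by
      rw [hXim]; exact (hfin.image _).image _
    have hXsub : ({q} * (Subtype.val '' S) * {r} : Set M) ⊆ ↑H := by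
      rw [hXim]; rintro _ ⟨_, ⟨s, hs, rfl⟩, rfl⟩; exact hmem s hs
    exact imRat_of_finite hXfin hXsub
  | union hA hB ihA ihB =>
    intro q r hq hr hmem
    obtain ⟨E₁, h1, e1⟩ := ihA q r hq hr (fun s hs => hmem s (Or.inl hs))
    obtain ⟨E₂, h2, e2⟩ := ihB q r hq hr (fun s hs => hmem s (Or.inr hs))
    refine ⟨E₁ ∪ E₂, IsRat.union h1 h2, ?_⟩
    rw [Set.image_union, e1, e2, Set.image_union, Set.mul_union, Set.union_mul]
  | mul hA hB ihA ihB =>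
    rename_i A B
    intro q r hq hr hmem
    rcases Set.eq_empty_or_nonempty A with rfl | ⟨s₀, hs₀⟩
    · exact ⟨∅, IsRat.finite _ Set.finite_empty, by
        simp [Set.empty_mul, Set.mul_empty]⟩
    rcases Set.eq_empty_or_nonempty B with rfl | ⟨t₀, ht₀⟩
    · exact ⟨∅, IsRat.finite _ Set.finite_empty, by
        simp [Set.empty_mul, Set.mul_empty]⟩
    obtain ⟨ur, rfl⟩ := hr
    obtain ⟨uq, rfl⟩ := hq
    have ht₀u : IsUnit ((t₀ : M)) := by
      obtain ⟨c, _, hc1, hc2⟩ := hHgrp _ t₀.2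
      exact isUnit_iff_exists.mpr ⟨c, hc1, hc2⟩
    let uw : Mˣ := ht₀u.unit * ur
    have huw : (uw : M) = (t₀ : M) * ur := by
      simp [uw]
    have hypA : ∀ s ∈ A, (uq : M) * (s : M) * (uw : M) ∈ H := by
      intro s hs
      have h := hmem (s * t₀) (Set.mul_mem_mul hs ht₀)
      rw [huw]
      rw [Submonoid.coe_mul] at h
      simpa [mul_assoc] using h
    have hx : (uq : M) * ((s₀ * t₀ : H) : M) * (ur : M) ∈ H :=
      hmem _ (Set.mul_mem_mul hs₀ ht₀)
    obtain ⟨x', hx'H, hxx', hx'x⟩ := hHgrp _ hx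
    have hx_eq : (uq : M) * ((s₀ * t₀ : H) : M) * (ur : M) = (uq : M) * (s₀ : M) * (uw : M) := by
      rw [huw, Submonoid.coe_mul]; simp [mul_assoc]
    have hypB : ∀ t ∈ B, ((uw⁻¹ : Mˣ) : M) * (t : M) * (ur : M) ∈ H := by
      intro t ht
      have hxt : (uq : M) * ((s₀ * t : H) : M) * (ur : M) ∈ H := hmem _ (Set.mul_mem_mul hs₀ ht)
      have h1 : ((uq : M) * ((s₀ * t₀ : H) : M) * (ur : M)) * (((uw⁻¹ : Mˣ) : M) * (t : M) * (ur : M))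
          = (uq : M) * (s₀ : M) * ((t : M) * (ur : M)) := by
        rw [mul_assoc ((uw⁻¹ : Mˣ) : M), hx_eq, unit_sandwich_cancel]
      have key : ((uw⁻¹ : Mˣ) : M) * (t : M) * (ur : M)
          = x' * ((uq : M) * ((s₀ * t : H) : M) * (ur : M)) := by
        have h2 : (uq : M) * ((s₀ * t : H) : M) * (ur : M)
            = ((uq : M) * ((s₀ * t₀ : H) : M) * (ur : M)) * (((uw⁻¹ : Mˣ) : M) * (t : M) * (ur : M)) := by
          rw [h1, Submonoid.coe_mul]; simp [mul_assoc]
        rw [h2, ← mul_assoc, hx'x, one_mul]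
      rw [key]; exact H.mul_mem hx'H hxt
    obtain ⟨E₁, hE₁, e₁⟩ := ihA (uq : M) (uw : M) uq.isUnit uw.isUnit hypA
    obtain ⟨E₂, hE₂, e₂⟩ := ihB ((uw⁻¹ : Mˣ) : M) (ur : M) (uw⁻¹).isUnit ur.isUnit hypB
    refine ⟨E₁ * E₂, IsRat.mul hE₁ hE₂, ?_⟩
    rw [image_val_mul, e₁, e₂, image_val_mul, sandwich_mul_sandwich]
  | star hA ih =>
    rename_i S
    intro q r hq hr hmem
    obtain ⟨ur, rfl⟩ := hr
    obtain ⟨uq, rfl⟩ := hq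
    have h1H : (uq : M) * (ur : M) ∈ H := by
      have h := hmem 1 (Submonoid.one_mem _)
      simpa using h
    obtain ⟨c', hc'H, hcc', hc'c⟩ := hHgrp _ h1H
    have hrc : (ur : M) * c' = ((uq⁻¹ : Mˣ) : M) := by
      calc (ur : M) * c' = ((uq⁻¹ : Mˣ) : M) * ((uq : M) * ((ur : M) * c')) :=
            (Units.inv_mul_cancel_left _ _).symm
        _ = ((uq⁻¹ : Mˣ) : M) * (((uq : M) * (ur : M)) * c') := by rw [mul_assoc]
        _ = ((uq⁻¹ : Mˣ) : M) * 1 := by rw [hcc']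
        _ = ((uq⁻¹ : Mˣ) : M) := mul_one _
    have hypS : ∀ s ∈ S, (uq : M) * (s : M) * ((uq⁻¹ : Mˣ) : M) ∈ H := by
      intro s hs
      have hs' : (uq : M) * (s : M) * (ur : M) ∈ H := hmem s (Submonoid.subset_closure hs)
      have key : (uq : M) * (s : M) * ((uq⁻¹ : Mˣ) : M) = ((uq : M) * (s : M) * (ur : M)) * c' := by
        rw [← hrc, ← mul_assoc]
      rw [key]; exact H.mul_mem hs' hc'H
    obtain ⟨E₁, hE₁, e₁⟩ := ih (uq : M) ((uq⁻¹ : Mˣ) : M) uq.isUnit (uq⁻¹).isUnit hypS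
    let φ : M →* M :=
      { toFun := fun x => (uq : M) * x * ((uq⁻¹ : Mˣ) : M)
        map_one' := by simp
        map_mul' := fun x y => by simp [mul_assoc, Units.inv_mul_cancel_left] }
    have hconj : ∀ X : Set M, ({((uq : M))} * X * {((uq⁻¹ : Mˣ) : M)} : Set M) = ⇑φ '' X := by
      intro X; exact sandwich_eq_image _ _ _
    refine ⟨(↑(Submonoid.closure E₁) : Set H) * {⟨(uq : M) * (ur : M), h1H⟩},
      IsRat.mul (IsRat.star hE₁) (IsRat.finite _ (Set.finite_singleton _)), ?_⟩
    rw [image_val_mul, image_val_closure, e₁, Set.image_singleton, image_val_closure]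
    calc (↑(Submonoid.closure ({((uq : M))} * (Subtype.val '' S) * {((uq⁻¹ : Mˣ) : M)})) : Set M)
          * {(uq : M) * (ur : M)}
        = (↑(Submonoid.closure (⇑φ '' (Subtype.val '' S))) : Set M) * {(uq : M) * (ur : M)} := by
          rw [hconj]
      _ = (↑((Submonoid.closure (Subtype.val '' S)).map φ) : Set M) * {(uq : M) * (ur : M)} := by
          rw [MonoidHom.map_mclosure]
      _ = (⇑φ '' ↑(Submonoid.closure (Subtype.val '' S))) * {(uq : M) * (ur : M)} := by
          rw [Submonoid.coe_map]
      _ = ({((uq : M))} * ↑(Submonoid.closure (Subtype.val '' S)) * {((uq⁻¹ : Mˣ) : M)})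
          * {(uq : M) * (ur : M)} := by rw [hconj]
      _ = {((uq : M))} * ↑(Submonoid.closure (Subtype.val '' S)) * {(ur : M)} := by
          rw [mul_assoc, Set.singleton_mul_singleton, Units.inv_mul_cancel_left]

end Sandwich

section FlatList
variable {M : Type*} [Monoid M] {G H : Submonoid M}

lemma flatList (hHG : H ≤ G)
    (hGgrp : ∀ g ∈ G, ∃ g' ∈ G, g * g' = 1 ∧ g' * g = 1)
    (hHgrp : ∀ h ∈ H, ∃ h' ∈ H, h * h' = 1 ∧ h' * h = 1)
    (hideal : ∀ m : M, m ∉ G → ∀ x y : M, x * m * y ∉ G)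
    (l : List (Set M))
    (hfac : ∀ S ∈ l, (∃ L' : Set H, IsRat L' ∧ S = ((↑) : H → M) '' L') ∨ ∃ g : M, S = {g}) :
    ∀ q : M, IsUnit q → ({q} * prodList l : Set M) ⊆ ↑H →
      ∃ E : Set H, IsRat E ∧ (Subtype.val '' E : Set M) = {q} * prodList l := by
  induction l with
  | nil =>
    intro q _ hsub
    have hqH : q ∈ H := by
      have hq1 : q ∈ ({q} * prodList [] : Set M) := by
        have := Set.mul_mem_mul (Set.mem_singleton q) (Set.mem_singleton (1 : M))
        simpa [prodList] using this
      exact hsub hq1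
    refine ⟨{⟨q, hqH⟩}, IsRat.finite _ (Set.finite_singleton _), ?_⟩
    show Subtype.val '' {(⟨q, hqH⟩ : H)} = {q} * ({1} : Set M)
    rw [Set.image_singleton, Set.singleton_mul_singleton, mul_one]
  | cons S rest ih =>
    intro q hq hsub
    have hfacrest : ∀ X ∈ rest,
        (∃ L' : Set H, IsRat L' ∧ X = ((↑) : H → M) '' L') ∨ ∃ g : M, X = {g} :=
      fun X hX => hfac X (List.mem_cons_of_mem _ hX)
    have hfacS := hfac S (List.mem_cons_self)
    have hcons : prodList (S :: rest) = S * prodList rest := rfl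
    rcases Set.eq_empty_or_nonempty (prodList rest) with hTe | ⟨t₀, ht₀⟩
    · refine ⟨∅, IsRat.finite _ Set.finite_empty, ?_⟩
      rw [Set.image_empty, hcons, hTe, Set.mul_empty, Set.mul_empty]
    rcases Set.eq_empty_or_nonempty S with rfl | ⟨a₀m, ha₀⟩
    · refine ⟨∅, IsRat.finite _ Set.finite_empty, ?_⟩
      rw [Set.image_empty, hcons, Set.empty_mul, Set.mul_empty]
    obtain ⟨uq, rfl⟩ := hq
    rcases hfacS with ⟨A', hA', rfl⟩ | ⟨g, rfl⟩
    · -- S = coe '' A'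
      obtain ⟨a₀, ha₀A, rfl⟩ := ha₀
      have hx0 : (uq : M) * ((a₀ : M) * t₀) ∈ H := by
        apply hsub
        rw [hcons]
        exact Set.mul_mem_mul (Set.mem_singleton _)
          (Set.mul_mem_mul ⟨a₀, ha₀A, rfl⟩ ht₀)
      have ht₀u : IsUnit t₀ := by
        have hxu : IsUnit ((uq : M) * ((a₀ : M) * t₀)) := by
          obtain ⟨c, _, hc1, hc2⟩ := hHgrp _ hx0
          exact isUnit_iff_exists.mpr ⟨c, hc1, hc2⟩
        have hau : IsUnit ((a₀ : M)) := by
          obtain ⟨c, _, hc1, hc2⟩ := hHgrp _ a₀.2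
          exact isUnit_iff_exists.mpr ⟨c, hc1, hc2⟩
        obtain ⟨ua, hua⟩ := hau
        have heq : t₀ = ((ua⁻¹ : Mˣ) : M) * (((uq⁻¹ : Mˣ) : M) * ((uq : M) * ((a₀ : M) * t₀))) := by
          rw [Units.inv_mul_cancel_left, ← hua, Units.inv_mul_cancel_left]
        rw [heq]
        exact (ua⁻¹).isUnit.mul ((uq⁻¹).isUnit.mul hxu)
      obtain ⟨ut, hut⟩ := ht₀u
      have hypA : ∀ a ∈ A', (uq : M) * (a : M) * (ut : M) ∈ H := by
        intro a ha
        have h : (uq : M) * ((a : M) * t₀) ∈ H := by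
          apply hsub
          rw [hcons]
          exact Set.mul_mem_mul (Set.mem_singleton ((uq : M)))
            (Set.mul_mem_mul (⟨a, ha, rfl⟩ : (a : M) ∈ Subtype.val '' A') ht₀)
        rw [hut]
        simpa [mul_assoc] using h
      obtain ⟨E₁, hE₁, e₁⟩ := ratSandwich hHgrp hA' (uq : M) (ut : M) uq.isUnit ut.isUnit hypA
      obtain ⟨x', hx'H, hxx', hx'x⟩ := hHgrp _ hx0
      have hsub₂ : ({((ut⁻¹ : Mˣ) : M)} * prodList rest : Set M) ⊆ ↑H := by
        intro x hx
        rw [Set.mem_mul] at hx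
        obtain ⟨w, hw, t, ht, rfl⟩ := hx
        rw [Set.mem_singleton_iff] at hw
        subst hw
        have hxt : (uq : M) * ((a₀ : M) * t) ∈ H := by
          apply hsub
          rw [hcons]
          exact Set.mul_mem_mul (Set.mem_singleton _)
            (Set.mul_mem_mul ⟨a₀, ha₀A, rfl⟩ ht)
        have h1 : ((uq : M) * ((a₀ : M) * t₀)) * (((ut⁻¹ : Mˣ) : M) * t)
            = (uq : M) * ((a₀ : M) * t) := by
          rw [← hut, ← mul_assoc (uq : M), unit_sandwich_cancel, mul_assoc]
        have key : ((ut⁻¹ : Mˣ) : M) * t = x' * ((uq : M) * ((a₀ : M) * t)) := by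
          have h2 : ((ut⁻¹ : Mˣ) : M) * t
              = (x' * ((uq : M) * ((a₀ : M) * t₀))) * (((ut⁻¹ : Mˣ) : M) * t) := by
            rw [hx'x, one_mul]
          rw [h2, mul_assoc, h1]
        rw [key]
        exact H.mul_mem hx'H hxt
      obtain ⟨E₂, hE₂, e₂⟩ := ih hfacrest ((ut⁻¹ : Mˣ) : M) (ut⁻¹).isUnit hsub₂
      refine ⟨E₁ * E₂, IsRat.mul hE₁ hE₂, ?_⟩
      rw [image_val_mul, e₁, e₂, hcons]
      exact sandwich_mul_left _ ut _ _
    · -- S = {g}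
      have hgt₀H : (uq : M) * (g * t₀) ∈ H := by
        apply hsub
        rw [hcons]
        exact Set.mul_mem_mul (Set.mem_singleton _) (Set.mul_mem_mul (Set.mem_singleton g) ht₀)
      have hGmem : (uq : M) * g ∈ G := by
        by_contra hnG
        refine hideal _ hnG 1 t₀ ?_
        have : (uq : M) * (g * t₀) ∈ G := hHG hgt₀H
        rw [one_mul, mul_assoc]
        exact this
      have hqg : IsUnit ((uq : M) * g) := by
        obtain ⟨c, _, hc1, hc2⟩ := hGgrp _ hGmem
        exact isUnit_iff_exists.mpr ⟨c, hc1, hc2⟩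
      have hset : ({(uq : M)} * prodList ({g} :: rest) : Set M)
          = {(uq : M) * g} * prodList rest := by
        show ({(uq : M)} * ({g} * prodList rest) : Set M) = _
        rw [← mul_assoc, Set.singleton_mul_singleton]
      obtain ⟨E₂, hE₂, e₂⟩ := ih hfacrest _ hqg (by rw [← hset]; exact hsub)
      exact ⟨E₂, hE₂, by rw [e₂, hset]⟩

end FlatList

section Glue
variable {M : Type*} [Monoid M] {H : Submonoid M}

lemma prodList_append (l₁ l₂ : List (Set M)) :
    prodList (l₁ ++ l₂) = prodList l₁ * prodList l₂ := by
  induction l₁ with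
  | nil =>
    show prodList l₂ = ({1} : Set M) * prodList l₂
    rw [Set.singleton_one, one_mul]
  | cons S l ih =>
    show S * prodList (l ++ l₂) = (S * prodList l) * prodList l₂
    rw [ih, mul_assoc]

lemma flatProd_mul {P Q : Set M} (hP : IsFlatProd H P) (hQ : IsFlatProd H Q) :
    IsFlatProd H (P * Q) := by
  obtain ⟨l₁, hf₁, rfl⟩ := hP
  obtain ⟨l₂, hf₂, rfl⟩ := hQ
  refine ⟨l₁ ++ l₂, ?_, (prodList_append l₁ l₂).symm⟩
  intro S hS
  rcases List.mem_append.mp hS with h | h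
  exacts [hf₁ S h, hf₂ S h]

lemma flatProd_singleton (a : M) : IsFlatProd H ({a} : Set M) := by
  refine ⟨[{a}], ?_, ?_⟩
  · intro S hS
    rw [List.mem_singleton] at hS
    exact Or.inr ⟨a, hS⟩
  · show ({a} : Set M) = {a} * ({1} : Set M)
    rw [Set.singleton_one, mul_one]

lemma iUnion_fin_succ {α : Type*} (n : ℕ) (f : Fin (n + 1) → Set α) :
    (⋃ i, f i) = f 0 ∪ ⋃ i : Fin n, f i.succ := by
  ext x
  simp only [Set.mem_iUnion, Set.mem_union]
  constructor
  · rintro ⟨i, hi⟩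
    rcases Fin.eq_zero_or_eq_succ i with rfl | ⟨j, rfl⟩
    exacts [Or.inl hi, Or.inr ⟨j, hi⟩]
  · rintro (h | ⟨j, hj⟩)
    exacts [⟨0, h⟩, ⟨j.succ, hj⟩]

lemma isFRat_empty : IsFRat H (∅ : Set M) :=
  ⟨0, Fin.elim0, fun i => i.elim0, (Set.iUnion_of_empty _).symm⟩

lemma isFRat_cons {P Q : Set M} (hP : IsFlatProd H P) (hQ : IsFRat H Q) :
    IsFRat H (P ∪ Q) := by
  obtain ⟨m, g, hg, rfl⟩ := hQ
  refine ⟨m + 1, Fin.cons P g, ?_, ?_⟩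
  · intro i
    refine Fin.cases ?_ ?_ i
    · rw [Fin.cons_zero]; exact hP
    · intro j; rw [Fin.cons_succ]; exact hg j
  · have h2 : (⋃ i : Fin m, (Fin.cons P g : Fin (m + 1) → Set M) i.succ) = ⋃ i, g i :=
      Set.iUnion_congr fun j => by rw [Fin.cons_succ]
    rw [iUnion_fin_succ, Fin.cons_zero, h2]

lemma isFRat_iUnion_aux :
    ∀ (n : ℕ) (f : Fin n → Set M), (∀ i, IsFlatProd H (f i)) →
      ∀ Q : Set M, IsFRat H Q → IsFRat H ((⋃ i, f i) ∪ Q) := by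
  intro n
  induction n with
  | zero =>
    intro f _ Q hQ
    rw [Set.iUnion_of_empty, Set.empty_union]
    exact hQ
  | succ n ihn =>
    intro f hf Q hQ
    rw [iUnion_fin_succ, Set.union_assoc]
    exact isFRat_cons (hf 0) (ihn _ (fun i => hf i.succ) Q hQ)

lemma isFRat_union {P Q : Set M} (hP : IsFRat H P) (hQ : IsFRat H Q) :
    IsFRat H (P ∪ Q) := by
  obtain ⟨n, f, hf, rfl⟩ := hP
  exact isFRat_iUnion_aux n f hf Q hQ

lemma isFRat_of_finite {S : Set M} (hS : S.Finite) : IsFRat H S :=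
  Set.Finite.induction_on (motive := fun s _ => IsFRat H s) S hS isFRat_empty fun _ _ ih => by
    rw [Set.insert_eq]
    exact isFRat_cons (flatProd_singleton _) ih

lemma isFRat_mul_flat {P T : Set M} (hP : IsFRat H P) (hT : IsFlatProd H T) :
    IsFRat H (P * T) := by
  obtain ⟨n, f, hf, rfl⟩ := hP
  exact ⟨n, fun i => f i * T, fun i => flatProd_mul (hf i) hT, Set.iUnion_mul _ _⟩

lemma isFRat_iUnion2 :
    ∀ (n : ℕ) (g : Fin n → Set M), (∀ i, IsFRat H (g i)) → IsFRat H (⋃ i, g i) := by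
  intro n
  induction n with
  | zero => intro g _; rw [Set.iUnion_of_empty]; exact isFRat_empty
  | succ n ihn =>
    intro g hg
    rw [iUnion_fin_succ]
    exact isFRat_union (hg 0) (ihn _ fun i => hg i.succ)

lemma isFRat_mul {P Q : Set M} (hP : IsFRat H P) (hQ : IsFRat H Q) :
    IsFRat H (P * Q) := by
  obtain ⟨m, g, hg, rfl⟩ := hQ
  rw [Set.mul_iUnion]
  exact isFRat_iUnion2 m _ fun i => isFRat_mul_flat hP (hg i)

lemma gen_imageRat {L' : Set H} (hL : IsRat L') : Gen H (Subtype.val '' L' : Set M) := by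
  induction hL with
  | finite S h => exact Gen.finite _ (h.image _)
  | union hA hB ihA ihB => rw [Set.image_union]; exact Gen.union ihA ihB
  | mul hA hB ihA ihB => rw [image_val_mul]; exact Gen.mul ihA ihB
  | star hA ih =>
    rename_i S
    rw [image_val_closure]
    exact Gen.star ih (by rintro _ ⟨s, _, rfl⟩; exact s.2)

lemma gen_prodList (l : List (Set M))
    (hfac : ∀ S ∈ l, (∃ L' : Set H, IsRat L' ∧ S = ((↑) : H → M) '' L') ∨ ∃ g : M, S = {g}) :
    Gen H (prodList l) := by
  induction l with
  | nil => exact Gen.finite _ (Set.finite_singleton _)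
  | cons S rest ih =>
    have hS : Gen H S := by
      rcases hfac S (List.mem_cons_self) with ⟨L', hL', rfl⟩ | ⟨g, rfl⟩
      · exact gen_imageRat hL'
      · exact Gen.finite _ (Set.finite_singleton _)
    exact Gen.mul hS (ih fun X hX => hfac X (List.mem_cons_of_mem _ hX))

lemma gen_iUnion :
    ∀ (n : ℕ) (f : Fin n → Set M), (∀ i, Gen H (f i)) → Gen H (⋃ i, f i) := by
  intro n
  induction n with
  | zero => intro f _; rw [Set.iUnion_of_empty]; exact Gen.finite _ Set.finite_empty
  | succ n ihn =>
    intro f hf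
    rw [iUnion_fin_succ]
    exact Gen.union (hf 0) (ihn _ fun i => hf i.succ)

lemma exists_rat_iUnion :
    ∀ (n : ℕ) (f : Fin n → Set M),
      (∀ i, ∃ E : Set H, IsRat E ∧ Subtype.val '' E = f i) →
      ∃ E : Set H, IsRat E ∧ Subtype.val '' E = ⋃ i, f i := by
  intro n
  induction n with
  | zero =>
    intro f _
    exact ⟨∅, IsRat.finite _ Set.finite_empty, by rw [Set.image_empty, Set.iUnion_of_empty]⟩
  | succ n ihn =>
    intro f hp
    obtain ⟨E₀, h₀, e₀⟩ := hp 0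
    obtain ⟨E₁, h₁, e₁⟩ := ihn (fun i => f i.succ) (fun i => hp i.succ)
    exact ⟨E₀ ∪ E₁, IsRat.union h₀ h₁, by rw [Set.image_union, e₀, e₁, iUnion_fin_succ]⟩

end Glue

section Core
variable {M : Type*} [Monoid M] {G H : Submonoid M}

lemma isFRat_imRat (hHG : H ≤ G)
    (hGgrp : ∀ g ∈ G, ∃ g' ∈ G, g * g' = 1 ∧ g' * g = 1)
    (hHgrp : ∀ h ∈ H, ∃ h' ∈ H, h * h' = 1 ∧ h' * h = 1)
    (hideal : ∀ m : M, m ∉ G → ∀ x y : M, x * m * y ∉ G)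
    {L : Set M} (h : IsFRat H L) (hsub : L ⊆ ↑H) :
    ∃ E : Set H, IsRat E ∧ Subtype.val '' E = L := by
  obtain ⟨n, f, hf, rfl⟩ := h
  refine exists_rat_iUnion n f fun i => ?_
  obtain ⟨l, hfac, hfl⟩ := hf i
  have h1 : ({(1 : M)} * prodList l : Set M) ⊆ ↑H := by
    rw [Set.singleton_one, one_mul, ← hfl]
    exact (Set.subset_iUnion f i).trans hsub
  obtain ⟨E, hE, he⟩ := flatList hHG hGgrp hHgrp hideal l hfac 1 isUnit_one h1
  exact ⟨E, hE, by rw [he, Set.singleton_one, one_mul, hfl]⟩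

end Core


/-- Let `H ≤ G` be submonoids of `M` such that `G` and `H` are groups and
`M \ G` is an ideal (possibly empty). Then the flat rational subsets of `M`
relative to `H` form exactly the smallest family of subsets of `M` containing
all finite subsets, closed under finite union and concatenation, and closed
under Kleene star of members contained in `H`. -/
theorem stmt16 (M : Type*) [Monoid M] (G H : Submonoid M) (hHG : H ≤ G)
    (hGgrp : ∀ g ∈ G, ∃ g' ∈ G, g * g' = 1 ∧ g' * g = 1)
    (hHgrp : ∀ h ∈ H, ∃ h' ∈ H, h * h' = 1 ∧ h' * h = 1)
    (hideal : ∀ m : M, m ∉ G → ∀ x y : M, x * m * y ∉ G) :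
    ∀ L : Set M, IsFRat H L ↔ Gen H L := by
  intro L
  constructor
  · rintro ⟨n, f, hf, rfl⟩
    refine gen_iUnion n f fun i => ?_
    obtain ⟨l, hfac, hfl⟩ := hf i
    rw [hfl]
    exact gen_prodList l hfac
  · intro hgen
    induction hgen with
    | finite S h => exact isFRat_of_finite h
    | union hA hB ihA ihB => exact isFRat_union ihA ihB
    | mul hA hB ihA ihB => exact isFRat_mul ihA ihB
    | star hA hsub ih =>
      rename_i S
      obtain ⟨E, hE, he⟩ := isFRat_imRat hHG hGgrp hHgrp hideal ih hsub
      refine ⟨1, fun _ => (Submonoid.closure S : Set M), fun i => ?_, (Set.iUnion_const _).symm⟩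
      refine ⟨[Subtype.val '' ((Submonoid.closure E : Submonoid H) : Set H)], ?_, ?_⟩
      · intro X hX
        rw [List.mem_singleton] at hX
        subst hX
        exact Or.inl ⟨_, IsRat.star hE, rfl⟩
      · show (Submonoid.closure S : Set M)
          = Subtype.val '' ((Submonoid.closure E : Submonoid H) : Set H) * ({1} : Set M)
        rw [Set.singleton_one, mul_one, image_val_closure, he]
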